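/- For every real number x with 0 < x < 1, the series ∑_{n=1}^∞ ln(1 - x^n) converges and equals -∑_{n=1}^∞ (σ(n)/n)·x^n, where σ(n) denotes the sum of the positive divisors of n. -/

import Mathlib

set_option maxHeartbeats 1000000


/-- The sum of the positive divisors of `n`. -/
def sigma1 (n : ℕ) : ℕ := ∑ d ∈ n.divisors, d

lemma sum_fst_antidiag (m : ℕ) :
    ∑ p ∈ m.divisorsAntidiagonal, p.1 = sigma1 m := by
  rw [← Nat.map_div_right_divisors, Finset.sum_map, sigma1]
  rfl

/-- For `0 < x < 1`, the series `∑_{n=1}^∞ ln(1 - x^n)` converges and equals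
`-∑_{n=1}^∞ (σ(n)/n)·x^n`. -/
theorem log_series_eq_neg_sigma_series (x : ℝ) (hx0 : 0 < x) (hx1 : x < 1) :
    HasSum (fun n : ℕ => Real.log (1 - x ^ (n + 1)))
      (-∑' n : ℕ, (sigma1 (n + 1) : ℝ) / (n + 1) * x ^ (n + 1)) := by
  have hxabs : |x| < 1 := by rwa [abs_of_pos hx0]
  set F : ℕ × ℕ → ℝ := fun p => x ^ ((p.1 + 1) * (p.2 + 1)) / ((p.2 : ℝ) + 1) with hFdef
  -- Summability of the double series
  have hFnonneg : ∀ p, 0 ≤ F p := fun p =>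
    div_nonneg (pow_nonneg hx0.le _) (by positivity)
  have hbound : ∀ p : ℕ × ℕ, F p ≤ x ^ (p.1 + 1) * x ^ p.2 := by
    intro p
    have hexp : p.1 + 1 + p.2 ≤ (p.1 + 1) * (p.2 + 1) := by nlinarith [p.1.zero_le, p.2.zero_le]
    calc F p ≤ x ^ ((p.1 + 1) * (p.2 + 1)) := by
          apply div_le_self (pow_nonneg hx0.le _)
          have : (0:ℝ) ≤ (p.2 : ℝ) := Nat.cast_nonneg _
          linarith
      _ ≤ x ^ (p.1 + 1 + p.2) := pow_le_pow_of_le_one hx0.le hx1.le hexp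
      _ = x ^ (p.1 + 1) * x ^ p.2 := pow_add x _ _
  have hgeom : Summable (fun n : ℕ => x ^ n) := summable_geometric_of_lt_one hx0.le hx1
  have hFsummable : Summable F := by
    apply Summable.of_nonneg_of_le hFnonneg hbound
    exact Summable.mul_of_nonneg ((summable_nat_add_iff 1).mpr hgeom) hgeom
      (fun n => pow_nonneg hx0.le _) (fun n => pow_nonneg hx0.le _)
  set T : ℝ := ∑' p, F p with hTdef
  have hT : HasSum F T := hFsummable.hasSum
  -- Row sums : ∑_k F (n, k) = -log (1 - x^(n+1))
  have hrows : ∀ n : ℕ, HasSum (fun k => F (n, k)) (-Real.log (1 - x ^ (n + 1))) := by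
    intro n
    have habs : |x ^ (n + 1)| < 1 := by
      rw [abs_pow]
      exact pow_lt_one₀ (abs_nonneg x) hxabs (Nat.succ_ne_zero n)
    have h := Real.hasSum_pow_div_log_of_abs_lt_one habs
    convert h using 2 with k
    rw [hFdef]
    simp only
    rw [← pow_mul]
    try push_cast
    try ring_nf
  -- First fiberwise decomposition: rows
  have hA : HasSum (fun n : ℕ => -Real.log (1 - x ^ (n + 1))) T :=
    hT.prod_fiberwise hrows
  -- Reindex to the shifted function F'
  set F' : ℕ × ℕ → ℝ := fun p =>
    if p.1 = 0 ∨ p.2 = 0 then 0 else x ^ (p.1 * p.2) / (p.2 : ℝ) with hF'def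
  have hinj : Function.Injective (fun p : ℕ × ℕ => (p.1 + 1, p.2 + 1)) := by
    intro p q h
    simp only [Prod.mk.injEq] at h
    exact Prod.ext (by omega) (by omega)
  have hvanish : ∀ p : ℕ × ℕ,
      p ∉ Set.range (fun p : ℕ × ℕ => (p.1 + 1, p.2 + 1)) → F' p = 0 := by
    rintro ⟨a, b⟩ hp
    rw [hF'def]
    simp only
    rw [if_pos]
    by_contra hc
    push_neg at hc
    exact hp ⟨(a - 1, b - 1), by simp only [Prod.mk.injEq]; omega⟩
  have hB : HasSum F' T := by
    rw [← Function.Injective.hasSum_iff hinj hvanish]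
    convert hT using 1
    funext p
    rw [hF'def, hFdef]
    simp only [Function.comp]
    rw [if_neg (by omega)]
    push_cast
    ring_nf
  -- Second fiberwise decomposition: along p.1 * p.2
  have hC : HasSum (fun m : ℕ =>
      ∑' p : (fun p : ℕ × ℕ => p.1 * p.2) ⁻¹' {m}, F' p) T :=
    hB.tsum_fiberwise _
  set G : ℕ → ℝ := fun m => (sigma1 m : ℝ) / m * x ^ m with hGdef
  have hfiber : ∀ m : ℕ,
      (∑' p : (fun p : ℕ × ℕ => p.1 * p.2) ⁻¹' {m}, F' p) = G m := by
    intro m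
    rcases eq_or_ne m 0 with rfl | hm
    · have : ∀ p : (fun p : ℕ × ℕ => p.1 * p.2) ⁻¹' {(0:ℕ)}, F' p = 0 := by
        rintro ⟨⟨a, b⟩, hp⟩
        simp only [Set.mem_preimage, Set.mem_singleton_iff, Nat.mul_eq_zero] at hp
        rw [hF'def]
        simp only
        rw [if_pos hp]
      rw [tsum_congr this, tsum_zero]
      simp [hGdef, sigma1]
    · have hset : (fun p : ℕ × ℕ => p.1 * p.2) ⁻¹' {m} = ↑m.divisorsAntidiagonal := by
        ext p
        simp [Nat.mem_divisorsAntidiagonal, hm]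
      rw [hset, Finset.tsum_subtype' m.divisorsAntidiagonal F']
      have hterm : ∀ p ∈ m.divisorsAntidiagonal,
          F' p = (p.1 : ℝ) * (x ^ m / m) := by
        rintro ⟨a, b⟩ hp
        rw [Nat.mem_divisorsAntidiagonal] at hp
        obtain ⟨hpm, -⟩ := hp
        simp only at hpm ⊢
        have h1 : a ≠ 0 := by rintro rfl; simp at hpm; omega
        have h2 : b ≠ 0 := by rintro rfl; simp at hpm; omega
        rw [hF'def]
        simp only
        rw [if_neg (by tauto), ← hpm]
        have h1' : (a : ℝ) ≠ 0 := Nat.cast_ne_zero.mpr h1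
        have h2' : (b : ℝ) ≠ 0 := Nat.cast_ne_zero.mpr h2
        push_cast
        field_simp
      rw [Finset.sum_congr rfl hterm, ← Finset.sum_mul]
      have : (∑ p ∈ m.divisorsAntidiagonal, (p.1 : ℝ)) = (sigma1 m : ℝ) := by
        rw [← sum_fst_antidiag m]
        push_cast
        rfl
      rw [this, hGdef]
      ring
  have hD : HasSum G T := by rwa [funext hfiber] at hC
  have hG0 : G 0 = 0 := by simp [hGdef, sigma1]
  have hE : HasSum (fun n : ℕ => G (n + 1)) T := by
    have := (hasSum_nat_add_iff' (f := G) 1).mpr hD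
    simpa [hG0] using this
  have hTsum : (∑' n : ℕ, (sigma1 (n + 1) : ℝ) / (n + 1) * x ^ (n + 1)) = T := by
    rw [← hE.tsum_eq]
    apply tsum_congr
    intro n
    rw [hGdef]
    push_cast
    ring_nf
  rw [hTsum]
  simpa using hA.neg
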